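/- (Covering-number plus Hoeffding bound for the symmetrized block process.) Let T = 2τm for positive integers τ, m. Let μ̃ be any probability measure on S^m, let z̃^{(1)}, ..., z̃^{(τ)} be independent S^m-valued random blocks each with law μ̃, and let σ_1, ..., σ_τ be independent Rademacher random variables (P(σ_j = 1) = P(σ_j = −1) = 1/2) independent of the blocks. Then for every ε > 0, P( sup_{f∈F} |(1/τ)·Σ_{j=1}^τ σ_j·Σ_{t=1}^m ℓ_f(z̃^{(j)}_t)| ≥ mε/4 ) ≤ 2·N(ε/16, ℓ∘F, T)·exp(−ε²τ/(128B'²)), where z̃^{(j)}_t denotes the t-th coordinate of the block z̃^{(j)}. -/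

import Mathlib

open Finset

lemma sum_fn_prod {ι κ : Type*} [Fintype ι] [DecidableEq ι] [Fintype κ] (f : ι → κ → ℝ) :
    ∑ x : ι → κ, ∏ i, f i (x i) = ∏ i, ∑ j, f i j := by
  classical
  rw [← Fintype.piFinset_univ]
  exact Finset.sum_prod_piFinset _ _

lemma rad_mgf {n : ℕ} (a : Fin n → ℝ) (s : ℝ) :
    ∑ σ : Fin n → Bool, (1/2:ℝ)^n * Real.exp (s * ∑ j, (if σ j then (1:ℝ) else -1) * a j)
      = ∏ j, Real.cosh (s * a j) := by
  have h : ∀ σ : Fin n → Bool,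
      (1/2:ℝ)^n * Real.exp (s * ∑ j, (if σ j then (1:ℝ) else -1) * a j)
      = ∏ j, ((1/2:ℝ) * Real.exp (s * ((if σ j then (1:ℝ) else -1) * a j))) := by
    intro σ
    rw [Finset.prod_mul_distrib, Finset.prod_const, Finset.mul_sum, Real.exp_sum]
    simp [Finset.card_univ]
  simp_rw [h]
  have key := sum_fn_prod (fun j b => (1/2:ℝ) * Real.exp (s * ((if b = true then (1:ℝ) else -1) * a j)))
  rw [key]
  refine Finset.prod_congr rfl fun j _ => ?_
  rw [Fintype.sum_bool, Real.cosh_eq]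
  norm_num
  ring

lemma rad_onesided {n : ℕ} (hn : 0 < n) (a : Fin n → ℝ) (M c : ℝ) (hM : 0 < M) (hc : 0 < c)
    (ha : ∀ j, |a j| ≤ M) :
    ∑ σ : Fin n → Bool, (1/2:ℝ)^n *
        (if c ≤ ∑ j, (if σ j then (1:ℝ) else -1) * a j then (1:ℝ) else 0)
      ≤ Real.exp (-c^2 / (2 * n * M^2)) := by
  have hn' : (0:ℝ) < n := by exact_mod_cast hn
  set s : ℝ := c / (n * M^2) with hs
  have hspos : 0 < s := div_pos hc (by positivity)
  have step1 : ∀ σ : Fin n → Bool,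
      (1/2:ℝ)^n * (if c ≤ ∑ j, (if σ j then (1:ℝ) else -1) * a j then (1:ℝ) else 0)
      ≤ Real.exp (-(s*c)) *
        ((1/2:ℝ)^n * Real.exp (s * ∑ j, (if σ j then (1:ℝ) else -1) * a j)) := by
    intro σ
    rw [← mul_assoc, mul_comm (Real.exp (-(s*c))) ((1/2:ℝ)^n), mul_assoc]
    apply mul_le_mul_of_nonneg_left _ (by positivity)
    rw [← Real.exp_add]
    split_ifs with h
    · apply Real.one_le_exp; nlinarith
    · positivity
  calc ∑ σ : Fin n → Bool, (1/2:ℝ)^n *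
        (if c ≤ ∑ j, (if σ j then (1:ℝ) else -1) * a j then (1:ℝ) else 0)
      ≤ ∑ σ : Fin n → Bool, Real.exp (-(s*c)) *
        ((1/2:ℝ)^n * Real.exp (s * ∑ j, (if σ j then (1:ℝ) else -1) * a j)) :=
        Finset.sum_le_sum fun σ _ => step1 σ
    _ = Real.exp (-(s*c)) * ∏ j, Real.cosh (s * a j) := by
        rw [← Finset.mul_sum, rad_mgf]
    _ ≤ Real.exp (-(s*c)) * ∏ _j : Fin n, Real.exp (s^2 * M^2 / 2) := by
        apply mul_le_mul_of_nonneg_left _ (Real.exp_nonneg _)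
        refine Finset.prod_le_prod (fun j _ => (Real.cosh_pos _).le) ?_
        intro j _
        refine le_trans (Real.cosh_le_exp_half_sq _) (Real.exp_le_exp.2 ?_)
        have h1 : (a j)^2 ≤ M^2 := sq_le_sq' (by linarith [(abs_le.1 (ha j)).1]) (abs_le.1 (ha j)).2
        have h2 : (s * a j)^2 = s^2 * (a j)^2 := by ring
        nlinarith [sq_nonneg s]
    _ = Real.exp (-(s*c) + n * (s^2 * M^2 / 2)) := by
        rw [Finset.prod_const, Finset.card_univ, Fintype.card_fin, ← Real.exp_nat_mul,
          ← Real.exp_add]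
    _ = Real.exp (-c^2 / (2 * n * M^2)) := by
        congr 1
        rw [hs]
        field_simp
        ring

lemma rad_twosided {n : ℕ} (hn : 0 < n) (a : Fin n → ℝ) (M c : ℝ) (hM : 0 < M) (hc : 0 < c)
    (ha : ∀ j, |a j| ≤ M) :
    ∑ σ : Fin n → Bool, (1/2:ℝ)^n *
        (if c ≤ |∑ j, (if σ j then (1:ℝ) else -1) * a j| then (1:ℝ) else 0)
      ≤ 2 * Real.exp (-c^2 / (2 * n * M^2)) := by
  have key : ∀ σ : Fin n → Bool,
      (1/2:ℝ)^n * (if c ≤ |∑ j, (if σ j then (1:ℝ) else -1) * a j| then (1:ℝ) else 0)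
      ≤ (1/2:ℝ)^n * (if c ≤ ∑ j, (if σ j then (1:ℝ) else -1) * a j then (1:ℝ) else 0)
        + (1/2:ℝ)^n * (if c ≤ ∑ j, (if σ j then (1:ℝ) else -1) * (-a j) then (1:ℝ) else 0) := by
    intro σ
    have hneg : ∑ j, (if σ j then (1:ℝ) else -1) * (-a j)
        = -∑ j, (if σ j then (1:ℝ) else -1) * a j := by
      rw [← Finset.sum_neg_distrib]
      exact Finset.sum_congr rfl fun j _ => by ring
    rw [hneg]
    rcases abs_cases (∑ j, (if σ j then (1:ℝ) else -1) * a j) with ⟨h1, h2⟩ | ⟨h1, h2⟩ <;>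
      split_ifs <;> (try push_neg at *) <;> first | positivity | linarith [pow_nonneg (by norm_num : (0:ℝ) ≤ 1/2) n] | nlinarith [pow_nonneg (by norm_num : (0:ℝ) ≤ 1/2) n]
  calc ∑ σ : Fin n → Bool, (1/2:ℝ)^n *
        (if c ≤ |∑ j, (if σ j then (1:ℝ) else -1) * a j| then (1:ℝ) else 0)
      ≤ ∑ σ : Fin n → Bool, ((1/2:ℝ)^n * (if c ≤ ∑ j, (if σ j then (1:ℝ) else -1) * a j then (1:ℝ) else 0)
        + (1/2:ℝ)^n * (if c ≤ ∑ j, (if σ j then (1:ℝ) else -1) * (-a j) then (1:ℝ) else 0)) :=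
        Finset.sum_le_sum fun σ _ => key σ
    _ = (∑ σ : Fin n → Bool, (1/2:ℝ)^n * (if c ≤ ∑ j, (if σ j then (1:ℝ) else -1) * a j then (1:ℝ) else 0))
        + ∑ σ : Fin n → Bool, (1/2:ℝ)^n * (if c ≤ ∑ j, (if σ j then (1:ℝ) else -1) * (-a j) then (1:ℝ) else 0) :=
        Finset.sum_add_distrib
    _ ≤ Real.exp (-c^2 / (2 * n * M^2)) + Real.exp (-c^2 / (2 * n * M^2)) := by
        gcongr
        · exact rad_onesided hn a M c hM hc ha
        · exact rad_onesided hn (fun j => -a j) M c hM hc (fun j => by rw [abs_neg]; exact ha j)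
    _ = 2 * Real.exp (-c^2 / (2 * n * M^2)) := by ring

lemma grid_cover {S F : Type} [Fintype S] [Nonempty F] (B' δ : ℝ) (hδ : 0 < δ)
    (ℓ : F → S → ℝ) (h0 : ∀ f s, 0 ≤ ℓ f s) (hB : ∀ f s, ℓ f s ≤ B') :
    ∃ G : Finset F, ∀ f, ∃ g ∈ G, ∀ s, |ℓ f s - ℓ g s| ≤ δ := by
  classical
  set Φ : F → (S → ℤ) := fun f s => ⌊ℓ f s / δ⌋ with hΦ
  have hrange : Set.range Φ ⊆ Set.pi Set.univ (fun _ : S => Set.Icc (0:ℤ) ⌊B'/δ⌋) := by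
    rintro v ⟨f, rfl⟩ s _
    constructor
    · exact Int.floor_nonneg.2 (div_nonneg (h0 f s) hδ.le)
    · exact Int.floor_le_floor (by gcongr; exact hB f s)
  have hfin : (Set.range Φ).Finite :=
    (Set.Finite.pi fun _ => Set.finite_Icc _ _).subset hrange
  refine ⟨hfin.toFinset.image (Function.invFun Φ), fun f => ?_⟩
  refine ⟨Function.invFun Φ (Φ f),
    Finset.mem_image_of_mem _ (hfin.mem_toFinset.2 ⟨f, rfl⟩), fun s => ?_⟩
  have hΦeq : Φ (Function.invFun Φ (Φ f)) = Φ f := Function.invFun_eq ⟨f, rfl⟩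
  have h1 : ⌊ℓ (Function.invFun Φ (Φ f)) s / δ⌋ = ⌊ℓ f s / δ⌋ := congrFun hΦeq s
  set x := ℓ f s with hx
  set y := ℓ (Function.invFun Φ (Φ f)) s with hy
  have hx1 := Int.floor_le (x/δ)
  have hx2 := Int.lt_floor_add_one (x/δ)
  have hy1 := Int.floor_le (y/δ)
  have hy2 := Int.lt_floor_add_one (y/δ)
  rw [h1] at hy1 hy2
  have ex : δ * (x/δ) = x := mul_div_cancel₀ x (ne_of_gt hδ)
  have ey : δ * (y/δ) = y := mul_div_cancel₀ y (ne_of_gt hδ)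
  rw [abs_le]
  constructor <;> nlinarith [hδ]

theorem stmt_9
    {S : Type} [Fintype S] [Nonempty S] [DecidableEq S]
    -- the function class F and the losses ℓ_f : S → [0, B']
    (B' : ℝ) (hB' : 0 < B')
    (F : Type) (ℓ : F → S → ℝ) (hℓ0 : ∀ f s, 0 ≤ ℓ f s) (hℓB : ∀ f s, ℓ f s ≤ B')
    (m τ' T : ℕ) (hm : 1 ≤ m) (hτ : 1 ≤ τ') (hT : T = 2 * τ' * m)
    -- μ̃ : an arbitrary probability measure on S^m (law of each block)
    (μ : (Fin m → S) → ℝ) (hμ0 : ∀ Y, 0 ≤ μ Y) (hμ1 : ∑ Y, μ Y = 1)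
    (ε : ℝ) (hε : 0 < ε)
    -- Ncov = N(ε/16, ℓ∘F, T)
    (Ncov : ℕ)
    (hNcov : IsGreatest {n : ℕ | ∃ zs : Fin T → S,
      IsLeast {c : ℕ | ∃ G : Finset F, G.card = c ∧
        ∀ f : F, ∃ g ∈ G, ∀ t : Fin T, |ℓ f (zs t) - ℓ g (zs t)| ≤ ε / 16} n} Ncov) :
    -- the joint law of (blocks, signs) is the product of ∏_j μ̃ and uniform signs;
    -- a sign σ_j = ±1 is encoded by a Boolean
    (∑ p : (Fin τ' → Fin m → S) × (Fin τ' → Bool),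
      ({q | (m : ℝ) * ε / 4 ≤ ⨆ f : F,
          |(1 / (τ' : ℝ)) * ∑ j : Fin τ',
            (if q.2 j then (1 : ℝ) else -1) * ∑ t : Fin m, ℓ f (q.1 j t)|} :
        Set ((Fin τ' → Fin m → S) × (Fin τ' → Bool))).indicator
        (fun q => (∏ j, μ (q.1 j)) * (1 / 2) ^ τ') p)
      ≤ 2 * (Ncov : ℝ) * Real.exp (-(ε ^ 2 * (τ' : ℝ)) / (128 * B' ^ 2)) := by
  classical
  have hτ0 : (0:ℝ) < τ' := by exact_mod_cast hτ
  have hm0 : (0:ℝ) < m := by exact_mod_cast hm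
  have hRHS0 : (0:ℝ) ≤ 2 * (Ncov : ℝ) * Real.exp (-(ε ^ 2 * (τ' : ℝ)) / (128 * B' ^ 2)) := by
    positivity
  set E : Set ((Fin τ' → Fin m → S) × (Fin τ' → Bool)) :=
    {q | (m : ℝ) * ε / 4 ≤ ⨆ f : F,
        |(1 / (τ' : ℝ)) * ∑ j : Fin τ',
          (if q.2 j then (1 : ℝ) else -1) * ∑ t : Fin m, ℓ f (q.1 j t)|} with hE
  cases isEmpty_or_nonempty F with
  | inl hFe =>
    have hzero : ∀ p : (Fin τ' → Fin m → S) × (Fin τ' → Bool),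
        E.indicator (fun q => (∏ j, μ (q.1 j)) * (1 / 2 : ℝ) ^ τ') p = 0 := by
      intro p
      apply Set.indicator_of_notMem
      intro hp
      rw [hE, Set.mem_setOf_eq, Real.iSup_of_isEmpty] at hp
      nlinarith
    rw [Finset.sum_congr rfl fun p _ => hzero p]
    simpa using hRHS0
  | inr hFne =>
    have hmpos : 0 < m := hm
    have hTge : τ' * m ≤ T := by
      have h2 : 2 * τ' * m = τ' * m + τ' * m := by ring
      omega
    obtain ⟨s₀⟩ := (inferInstance : Nonempty S)
    set zs : (Fin τ' → Fin m → S) → Fin T → S := fun z k =>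
      if h : (k : ℕ) < τ' * m
      then z ⟨(k:ℕ) / m, (Nat.div_lt_iff_lt_mul hmpos).2 h⟩ ⟨(k:ℕ) % m, Nat.mod_lt _ hmpos⟩
      else s₀ with hzsdef
    have hzs_hit : ∀ z (j : Fin τ') (t : Fin m), ∃ k : Fin T, zs z k = z j t := by
      intro z j t
      have hk : m * (j:ℕ) + (t:ℕ) < τ' * m := by
        have h1 : (j:ℕ) + 1 ≤ τ' := j.2
        calc m * (j:ℕ) + (t:ℕ) < m * (j:ℕ) + m := by omega
          _ = m * ((j:ℕ)+1) := by ring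
          _ ≤ m * τ' := Nat.mul_le_mul_left _ h1
          _ = τ' * m := Nat.mul_comm _ _
      refine ⟨⟨m * (j:ℕ) + (t:ℕ), lt_of_lt_of_le hk hTge⟩, ?_⟩
      have e1 : (m * (j:ℕ) + (t:ℕ)) / m = (j:ℕ) := by
        rw [Nat.mul_add_div hmpos, Nat.div_eq_of_lt t.2, Nat.add_zero]
      have e2 : (m * (j:ℕ) + (t:ℕ)) % m = (t:ℕ) := by
        rw [Nat.mul_add_mod, Nat.mod_eq_of_lt t.2]
      rw [hzsdef]
      simp only []
      rw [dif_pos hk]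
      congr 1
      · exact Fin.ext e1
      · exact Fin.ext e2
    obtain ⟨Gall, hGall⟩ := grid_cover B' (ε/16) (by positivity) ℓ hℓ0 hℓB
    have hcov : ∀ z : Fin τ' → Fin m → S, ∃ G : Finset F, G.card ≤ Ncov ∧
        ∀ f, ∃ g ∈ G, ∀ (j : Fin τ') (t : Fin m), |ℓ f (z j t) - ℓ g (z j t)| ≤ ε / 16 := by
      intro z
      set C : Set ℕ := {c : ℕ | ∃ G : Finset F, G.card = c ∧
        ∀ f : F, ∃ g ∈ G, ∀ t : Fin T, |ℓ f (zs z t) - ℓ g (zs z t)| ≤ ε / 16} with hC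
      have hCne : C.Nonempty := by
        refine ⟨Gall.card, Gall, rfl, fun f => ?_⟩
        obtain ⟨g, hg, hgs⟩ := hGall f
        exact ⟨g, hg, fun t => hgs _⟩
      have hleast : IsLeast C (sInf C) := ⟨Nat.sInf_mem hCne, fun n hn => Nat.sInf_le hn⟩
      have hle : sInf C ≤ Ncov := hNcov.2 ⟨zs z, hleast⟩
      obtain ⟨G, hGc, hGcov⟩ := Nat.sInf_mem hCne
      refine ⟨G, hGc ▸ hle, fun f => ?_⟩
      obtain ⟨g, hg, hgt⟩ := hGcov f
      refine ⟨g, hg, fun j t => ?_⟩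
      obtain ⟨k, hk⟩ := hzs_hit z j t
      have := hgt k
      rwa [hk] at this
    choose G hGcard hGcov using hcov
    -- pointwise bound by union over the cover
    have key : ∀ p : (Fin τ' → Fin m → S) × (Fin τ' → Bool),
        E.indicator (fun q => (∏ j, μ (q.1 j)) * (1 / 2 : ℝ) ^ τ') p
        ≤ (∏ j, μ (p.1 j)) * ((1/2:ℝ)^τ' *
            ∑ g ∈ G p.1, (if (τ':ℝ) * ((m:ℝ) * ε / 8)
              ≤ |∑ j, (if p.2 j then (1:ℝ) else -1) * ∑ t, ℓ g (p.1 j t)| then (1:ℝ) else 0)) := by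
      intro p
      have hw0 : 0 ≤ ∏ j, μ (p.1 j) := Finset.prod_nonneg fun j _ => hμ0 _
      by_cases hp : p ∈ E
      · rw [Set.indicator_of_mem hp]
        have hsum : (1:ℝ) ≤ ∑ g ∈ G p.1, (if (τ':ℝ) * ((m:ℝ) * ε / 8)
            ≤ |∑ j, (if p.2 j then (1:ℝ) else -1) * ∑ t, ℓ g (p.1 j t)| then (1:ℝ) else 0) := by
          obtain ⟨f, hf⟩ : ∃ f : F, 3*((m:ℝ)*ε/16) <
              |(1 / (τ' : ℝ)) * ∑ j : Fin τ',
                (if p.2 j then (1 : ℝ) else -1) * ∑ t : Fin m, ℓ f (p.1 j t)| := by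
            have hp' : (m:ℝ)*ε/4 ≤ ⨆ f : F,
                |(1 / (τ' : ℝ)) * ∑ j : Fin τ',
                  (if p.2 j then (1 : ℝ) else -1) * ∑ t : Fin m, ℓ f (p.1 j t)| := hp
            refine exists_lt_of_lt_ciSup (lt_of_lt_of_le ?_ hp')
            nlinarith
          obtain ⟨g, hgG, hgd⟩ := hGcov p.1 f
          have hdiff : |(∑ j, (if p.2 j then (1:ℝ) else -1) * ∑ t, ℓ f (p.1 j t))
                        - ∑ j, (if p.2 j then (1:ℝ) else -1) * ∑ t, ℓ g (p.1 j t)|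
                       ≤ (τ':ℝ) * ((m:ℝ) * (ε/16)) := by
            rw [← Finset.sum_sub_distrib]
            refine le_trans (Finset.abs_sum_le_sum_abs _ _) ?_
            have hterm : ∀ j : Fin τ',
                |(if p.2 j then (1:ℝ) else -1) * ∑ t, ℓ f (p.1 j t)
                  - (if p.2 j then (1:ℝ) else -1) * ∑ t, ℓ g (p.1 j t)| ≤ (m:ℝ)*(ε/16) := by
              intro j
              rw [← mul_sub, abs_mul]
              have h1 : |(if p.2 j then (1:ℝ) else -1)| = 1 := by split_ifs <;> simp
              rw [h1, one_mul, ← Finset.sum_sub_distrib]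
              refine le_trans (Finset.abs_sum_le_sum_abs _ _) ?_
              calc ∑ t, |ℓ f (p.1 j t) - ℓ g (p.1 j t)| ≤ ∑ _t : Fin m, (ε/16) :=
                    Finset.sum_le_sum fun t _ => hgd j t
                _ = (m:ℝ)*(ε/16) := by simp [mul_comm]
            calc ∑ j, |(if p.2 j then (1:ℝ) else -1) * ∑ t, ℓ f (p.1 j t)
                  - (if p.2 j then (1:ℝ) else -1) * ∑ t, ℓ g (p.1 j t)|
                ≤ ∑ _j : Fin τ', (m:ℝ)*(ε/16) := Finset.sum_le_sum fun j _ => hterm j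
              _ = (τ':ℝ)*((m:ℝ)*(ε/16)) := by simp [mul_comm]
          have habs : |(1 / (τ' : ℝ)) * ∑ j : Fin τ',
              (if p.2 j then (1 : ℝ) else -1) * ∑ t : Fin m, ℓ f (p.1 j t)|
              = (1/(τ':ℝ)) * |∑ j : Fin τ',
                (if p.2 j then (1 : ℝ) else -1) * ∑ t : Fin m, ℓ f (p.1 j t)| := by
            rw [abs_mul, abs_of_pos (by positivity : (0:ℝ) < 1/(τ':ℝ))]
          rw [habs] at hf
          have hSf : (τ':ℝ) * (3*((m:ℝ)*ε/16)) < |∑ j : Fin τ',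
              (if p.2 j then (1 : ℝ) else -1) * ∑ t : Fin m, ℓ f (p.1 j t)| := by
            rw [one_div, inv_mul_eq_div] at hf
            rw [mul_comm]
            exact (lt_div_iff₀ hτ0).1 hf
          have hSg : (τ':ℝ) * ((m:ℝ) * ε / 8) ≤ |∑ j, (if p.2 j then (1:ℝ) else -1) *
              ∑ t, ℓ g (p.1 j t)| := by
            have := abs_sub_abs_le_abs_sub
              (∑ j, (if p.2 j then (1:ℝ) else -1) * ∑ t, ℓ f (p.1 j t))
              (∑ j, (if p.2 j then (1:ℝ) else -1) * ∑ t, ℓ g (p.1 j t))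
            nlinarith
          refine le_trans ?_ (Finset.single_le_sum (f := fun g => if (τ':ℝ) * ((m:ℝ) * ε / 8)
            ≤ |∑ j, (if p.2 j then (1:ℝ) else -1) * ∑ t, ℓ g (p.1 j t)| then (1:ℝ) else 0)
            (fun i _ => by split_ifs <;> norm_num) hgG)
          rw [if_pos hSg]
        calc (∏ j, μ (p.1 j)) * (1/2:ℝ)^τ' = (∏ j, μ (p.1 j)) * ((1/2:ℝ)^τ' * 1) := by ring
          _ ≤ _ := by
            refine mul_le_mul_of_nonneg_left ?_ hw0
            exact mul_le_mul_of_nonneg_left hsum (by positivity)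
      · rw [Set.indicator_of_notMem hp]
        refine mul_nonneg hw0 (mul_nonneg (by positivity) (Finset.sum_nonneg fun g _ => ?_))
        split_ifs <;> norm_num
    -- exponent bookkeeping
    have hexp : Real.exp (-((τ':ℝ)*((m:ℝ)*ε/8))^2 / (2 * (τ':ℝ) * ((m:ℝ)*B')^2))
        = Real.exp (-(ε ^ 2 * (τ' : ℝ)) / (128 * B' ^ 2)) := by
      congr 1
      rw [div_eq_div_iff (by positivity) (by positivity)]
      ring
    -- per-z Hoeffding + union bound
    have perz : ∀ z : Fin τ' → Fin m → S,
        ∑ σ : Fin τ' → Bool, ((1/2:ℝ)^τ' *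
            ∑ g ∈ G z, (if (τ':ℝ) * ((m:ℝ) * ε / 8)
              ≤ |∑ j, (if σ j then (1:ℝ) else -1) * ∑ t, ℓ g (z j t)| then (1:ℝ) else 0))
        ≤ (Ncov:ℝ) * (2 * Real.exp (-(ε ^ 2 * (τ' : ℝ)) / (128 * B' ^ 2))) := by
      intro z
      have hM : (0:ℝ) < (m:ℝ) * B' := by positivity
      have hc : (0:ℝ) < (τ':ℝ) * ((m:ℝ) * ε / 8) := by positivity
      have hbound : ∀ g : F,
          ∑ σ : Fin τ' → Bool, (1/2:ℝ)^τ' *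
            (if (τ':ℝ) * ((m:ℝ) * ε / 8)
              ≤ |∑ j, (if σ j then (1:ℝ) else -1) * ∑ t, ℓ g (z j t)| then (1:ℝ) else 0)
          ≤ 2 * Real.exp (-(ε ^ 2 * (τ' : ℝ)) / (128 * B' ^ 2)) := by
        intro g
        have ha : ∀ j : Fin τ', |∑ t, ℓ g (z j t)| ≤ (m:ℝ) * B' := by
          intro j
          rw [abs_of_nonneg (Finset.sum_nonneg fun t _ => hℓ0 g _)]
          calc ∑ t, ℓ g (z j t) ≤ ∑ _t : Fin m, B' := Finset.sum_le_sum fun t _ => hℓB g _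
            _ = (m:ℝ) * B' := by simp [mul_comm]
        have h2 := rad_twosided hτ (fun j => ∑ t, ℓ g (z j t)) ((m:ℝ)*B')
          ((τ':ℝ) * ((m:ℝ) * ε / 8)) hM hc ha
        rw [← hexp]
        simpa using h2
      calc ∑ σ : Fin τ' → Bool, ((1/2:ℝ)^τ' *
              ∑ g ∈ G z, (if (τ':ℝ) * ((m:ℝ) * ε / 8)
                ≤ |∑ j, (if σ j then (1:ℝ) else -1) * ∑ t, ℓ g (z j t)| then (1:ℝ) else 0))
          = ∑ g ∈ G z, ∑ σ : Fin τ' → Bool, (1/2:ℝ)^τ' *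
              (if (τ':ℝ) * ((m:ℝ) * ε / 8)
                ≤ |∑ j, (if σ j then (1:ℝ) else -1) * ∑ t, ℓ g (z j t)| then (1:ℝ) else 0) := by
            simp_rw [Finset.mul_sum]
            exact Finset.sum_comm
        _ ≤ ∑ _g ∈ G z, 2 * Real.exp (-(ε ^ 2 * (τ' : ℝ)) / (128 * B' ^ 2)) :=
            Finset.sum_le_sum fun g _ => hbound g
        _ = ((G z).card : ℝ) * (2 * Real.exp (-(ε ^ 2 * (τ' : ℝ)) / (128 * B' ^ 2))) := by
            rw [Finset.sum_const, nsmul_eq_mul]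
        _ ≤ (Ncov : ℝ) * (2 * Real.exp (-(ε ^ 2 * (τ' : ℝ)) / (128 * B' ^ 2))) := by
            have : ((G z).card : ℝ) ≤ (Ncov : ℝ) := by exact_mod_cast hGcard z
            have h0 : (0:ℝ) ≤ 2 * Real.exp (-(ε ^ 2 * (τ' : ℝ)) / (128 * B' ^ 2)) := by positivity
            exact mul_le_mul_of_nonneg_right this h0
    have hz1 : ∑ z : Fin τ' → Fin m → S, ∏ j, μ (z j) = 1 := by
      have h := sum_fn_prod (fun (_ : Fin τ') (Y : Fin m → S) => μ Y)
      simpa [hμ1] using h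
    calc ∑ p : (Fin τ' → Fin m → S) × (Fin τ' → Bool),
          E.indicator (fun q => (∏ j, μ (q.1 j)) * (1 / 2 : ℝ) ^ τ') p
        = ∑ z : Fin τ' → Fin m → S, ∑ σ : Fin τ' → Bool,
            E.indicator (fun q => (∏ j, μ (q.1 j)) * (1 / 2 : ℝ) ^ τ') (z, σ) :=
          Fintype.sum_prod_type _
      _ ≤ ∑ z : Fin τ' → Fin m → S, ∑ σ : Fin τ' → Bool,
            (∏ j, μ (z j)) * ((1/2:ℝ)^τ' *
              ∑ g ∈ G z, (if (τ':ℝ) * ((m:ℝ) * ε / 8)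
                ≤ |∑ j, (if σ j then (1:ℝ) else -1) * ∑ t, ℓ g (z j t)| then (1:ℝ) else 0)) :=
          Finset.sum_le_sum fun z _ => Finset.sum_le_sum fun σ _ => key (z, σ)
      _ = ∑ z : Fin τ' → Fin m → S, (∏ j, μ (z j)) * ∑ σ : Fin τ' → Bool,
            ((1/2:ℝ)^τ' *
              ∑ g ∈ G z, (if (τ':ℝ) * ((m:ℝ) * ε / 8)
                ≤ |∑ j, (if σ j then (1:ℝ) else -1) * ∑ t, ℓ g (z j t)| then (1:ℝ) else 0)) := by
          simp_rw [← Finset.mul_sum]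
      _ ≤ ∑ z : Fin τ' → Fin m → S, (∏ j, μ (z j)) *
            ((Ncov : ℝ) * (2 * Real.exp (-(ε ^ 2 * (τ' : ℝ)) / (128 * B' ^ 2)))) :=
          Finset.sum_le_sum fun z _ => mul_le_mul_of_nonneg_left (perz z)
            (Finset.prod_nonneg fun j _ => hμ0 _)
      _ = (∑ z : Fin τ' → Fin m → S, ∏ j, μ (z j)) *
            ((Ncov : ℝ) * (2 * Real.exp (-(ε ^ 2 * (τ' : ℝ)) / (128 * B' ^ 2)))) := by
          rw [← Finset.sum_mul]
      _ = 2 * (Ncov : ℝ) * Real.exp (-(ε ^ 2 * (τ' : ℝ)) / (128 * B' ^ 2)) := by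
          rw [hz1]; ring
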